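/- Let ν = (ν_l, ν_r) be a pair of square matrices (m×m and n×n) over K[[x_1,...,x_p]] with zero constant terms, and A ∈ Mat(m,n,p). Then exp(ν_l) A exp(−ν_r) agrees with A up to degree j (i.e., π_j(exp(ν_l) A exp(−ν_r)) = π_j A) if and only if π_j(ν_l A − A ν_r) = 0. -/

import Mathlib

/-- Truncation of a formal power series to total degree `≤ j`. -/
noncomputable def truncLE (K : Type*) [CommRing K] (p j : ℕ)
    (f : MvPowerSeries (Fin p) K) : MvPowerSeries (Fin p) K :=
  fun d => if (d.sum fun _ n => n) ≤ j then MvPowerSeries.coeff d f else 0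

/-- The `j`-jet of a matrix of formal power series. -/
noncomputable def jet {K : Type*} [CommRing K] {m n p : ℕ} (j : ℕ)
    (A : Matrix (Fin m) (Fin n) (MvPowerSeries (Fin p) K)) :
    Matrix (Fin m) (Fin n) (MvPowerSeries (Fin p) K) :=
  A.map (truncLE K p j)

/-- Convergence of a sequence of matrices in the `(x)`-adic (jet) topology. -/
def ConvergesTo {K : Type*} [CommRing K] {m n p : ℕ}
    (s : ℕ → Matrix (Fin m) (Fin n) (MvPowerSeries (Fin p) K))
    (L : Matrix (Fin m) (Fin n) (MvPowerSeries (Fin p) K)) : Prop :=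
  ∀ j : ℕ, ∃ k₀ : ℕ, ∀ k ≥ k₀, jet j (s k) = jet j L

/-- Partial sums of the matrix exponential series `Σ λ^i / i!`. -/
noncomputable def expPartial {K : Type*} [Field K] {m p : ℕ}
    (ν : Matrix (Fin m) (Fin m) (MvPowerSeries (Fin p) K)) (k : ℕ) :
    Matrix (Fin m) (Fin m) (MvPowerSeries (Fin p) K) :=
  ∑ i ∈ Finset.range (k + 1), ((i.factorial : K)⁻¹) • ν ^ i

/-- `E` is the exponential of `ν`, i.e. the limit of the partial sums of `Σ ν^i/i!`. -/
def IsExpOf {K : Type*} [Field K] {m p : ℕ}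
    (ν E : Matrix (Fin m) (Fin m) (MvPowerSeries (Fin p) K)) : Prop :=
  ConvergesTo (expPartial ν) E

section Aux

variable {K : Type*} [Field K] {m n p : ℕ}

/-- All coefficients of total degree `< s` vanish (entrywise). -/
def OrdM (s : ℕ) (X : Matrix (Fin m) (Fin n) (MvPowerSeries (Fin p) K)) : Prop :=
  ∀ (a : Fin m) (b : Fin n) (d : Fin p →₀ ℕ),
    (d.sum fun _ e => e) < s → MvPowerSeries.coeff d (X a b) = 0

lemma ord_zero (X : Matrix (Fin m) (Fin n) (MvPowerSeries (Fin p) K)) : OrdM 0 X := by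
  intro a b d hd; exact absurd hd (Nat.not_lt_zero _)

lemma ordM_mono {s t : ℕ} (h : s ≤ t) {X : Matrix (Fin m) (Fin n) (MvPowerSeries (Fin p) K)}
    (hX : OrdM t X) : OrdM s X := fun a b d hd => hX a b d (lt_of_lt_of_le hd h)

lemma ordM_add {s : ℕ} {X Y : Matrix (Fin m) (Fin n) (MvPowerSeries (Fin p) K)}
    (hX : OrdM s X) (hY : OrdM s Y) : OrdM s (X + Y) := by
  intro a b d hd
  simp [Matrix.add_apply, map_add, hX a b d hd, hY a b d hd]

lemma ordM_neg {s : ℕ} {X : Matrix (Fin m) (Fin n) (MvPowerSeries (Fin p) K)}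
    (hX : OrdM s X) : OrdM s (-X) := by
  intro a b d hd
  simp [Matrix.neg_apply, map_neg, hX a b d hd]

lemma ordM_sub {s : ℕ} {X Y : Matrix (Fin m) (Fin n) (MvPowerSeries (Fin p) K)}
    (hX : OrdM s X) (hY : OrdM s Y) : OrdM s (X - Y) := by
  rw [sub_eq_add_neg]; exact ordM_add hX (ordM_neg hY)

lemma ordM_smul {s : ℕ} (c : K) {X : Matrix (Fin m) (Fin n) (MvPowerSeries (Fin p) K)}
    (hX : OrdM s X) : OrdM s (c • X) := by
  intro a b d hd
  have : (c • X) a b = (MvPowerSeries.C c) * X a b := by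
    simp [Matrix.smul_apply, MvPowerSeries.smul_eq_C_mul]
  rw [this]
  classical
  rw [MvPowerSeries.coeff_mul]
  refine Finset.sum_eq_zero fun q hq => ?_
  rw [Finset.HasAntidiagonal.mem_antidiagonal] at hq
  have hq2 : (q.2.sum fun _ e => e) < s := by
    have : (d.sum fun _ e => e) = (q.1.sum fun _ e => e) + (q.2.sum fun _ e => e) := by
      rw [← hq]
      exact Finsupp.sum_add_index' (fun _ => rfl) (fun _ _ _ => rfl)
    omega
  simp [hX a b q.2 hq2]

lemma ordM_sum {s : ℕ} {ι : Type*} (t : Finset ι)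
    (f : ι → Matrix (Fin m) (Fin n) (MvPowerSeries (Fin p) K))
    (hf : ∀ i ∈ t, OrdM s (f i)) : OrdM s (∑ i ∈ t, f i) := by
  classical
  induction t using Finset.induction_on with
  | empty => intro a b d hd; simp
  | insert _ _ hx ih =>
    rw [Finset.sum_insert hx]
    exact ordM_add (hf _ (Finset.mem_insert_self _ _))
      (ih fun i hi => hf i (Finset.mem_insert_of_mem hi))

lemma deg_add_of_antidiagonal {d u v : Fin p →₀ ℕ} (h : u + v = d) :
    (d.sum fun _ e => e) = (u.sum fun _ e => e) + (v.sum fun _ e => e) := by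
  rw [← h]; exact Finsupp.sum_add_index' (fun _ => rfl) (fun _ _ _ => rfl)

lemma ordM_mul_left {s : ℕ} {l : ℕ} (M : Matrix (Fin l) (Fin m) (MvPowerSeries (Fin p) K))
    {X : Matrix (Fin m) (Fin n) (MvPowerSeries (Fin p) K)}
    (hX : OrdM s X) : OrdM s (M * X) := by
  classical
  intro a b d hd
  rw [Matrix.mul_apply, map_sum]
  refine Finset.sum_eq_zero fun c _ => ?_
  rw [MvPowerSeries.coeff_mul]
  refine Finset.sum_eq_zero fun q hq => ?_
  rw [Finset.HasAntidiagonal.mem_antidiagonal] at hq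
  have h2 : (q.2.sum fun _ e => e) < s := by
    have := deg_add_of_antidiagonal hq
    omega
  simp [hX c b q.2 h2]

lemma ordM_mul_right {s : ℕ} {l : ℕ}
    {X : Matrix (Fin m) (Fin n) (MvPowerSeries (Fin p) K)}
    (M : Matrix (Fin n) (Fin l) (MvPowerSeries (Fin p) K))
    (hX : OrdM s X) : OrdM s (X * M) := by
  classical
  intro a b d hd
  rw [Matrix.mul_apply, map_sum]
  refine Finset.sum_eq_zero fun c _ => ?_
  rw [MvPowerSeries.coeff_mul]
  refine Finset.sum_eq_zero fun q hq => ?_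
  rw [Finset.HasAntidiagonal.mem_antidiagonal] at hq
  have h1 : (q.1.sum fun _ e => e) < s := by
    have := deg_add_of_antidiagonal hq
    omega
  simp [hX a c q.1 h1]

lemma deg_eq_zero_iff {u : Fin p →₀ ℕ} (h : (u.sum fun _ e => e) = 0) : u = 0 := by
  simp only [Finsupp.sum, Finset.sum_eq_zero_iff] at h
  ext i
  by_cases hi : i ∈ u.support
  · exact h i hi
  · simpa using Finsupp.notMem_support_iff.mp hi

lemma ordM_raise_left {s : ℕ} {M : Matrix (Fin m) (Fin m) (MvPowerSeries (Fin p) K)}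
    (hM : ∀ a b, MvPowerSeries.constantCoeff (M a b) = 0)
    {X : Matrix (Fin m) (Fin n) (MvPowerSeries (Fin p) K)}
    (hX : OrdM s X) : OrdM (s + 1) (M * X) := by
  classical
  intro a b d hd
  rw [Matrix.mul_apply, map_sum]
  refine Finset.sum_eq_zero fun c _ => ?_
  rw [MvPowerSeries.coeff_mul]
  refine Finset.sum_eq_zero fun q hq => ?_
  rw [Finset.HasAntidiagonal.mem_antidiagonal] at hq
  have hsum := deg_add_of_antidiagonal hq
  by_cases h2 : (q.2.sum fun _ e => e) < s
  · simp [hX c b q.2 h2]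
  · have h1 : (q.1.sum fun _ e => e) = 0 := by omega
    have : q.1 = 0 := deg_eq_zero_iff h1
    rw [this, MvPowerSeries.coeff_zero_eq_constantCoeff, hM a c, zero_mul]

lemma ordM_raise_right {s : ℕ} {M : Matrix (Fin n) (Fin n) (MvPowerSeries (Fin p) K)}
    (hM : ∀ a b, MvPowerSeries.constantCoeff (M a b) = 0)
    {X : Matrix (Fin m) (Fin n) (MvPowerSeries (Fin p) K)}
    (hX : OrdM s X) : OrdM (s + 1) (X * M) := by
  classical
  intro a b d hd
  rw [Matrix.mul_apply, map_sum]
  refine Finset.sum_eq_zero fun c _ => ?_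
  rw [MvPowerSeries.coeff_mul]
  refine Finset.sum_eq_zero fun q hq => ?_
  rw [Finset.HasAntidiagonal.mem_antidiagonal] at hq
  have hsum := deg_add_of_antidiagonal hq
  by_cases h1 : (q.1.sum fun _ e => e) < s
  · simp [hX a c q.1 h1]
  · have h2 : (q.2.sum fun _ e => e) = 0 := by omega
    have : q.2 = 0 := deg_eq_zero_iff h2
    rw [this, MvPowerSeries.coeff_zero_eq_constantCoeff, hM c b, mul_zero]

lemma jet_eq_jet_iff {j : ℕ} {X Y : Matrix (Fin m) (Fin n) (MvPowerSeries (Fin p) K)} :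
    jet j X = jet j Y ↔ OrdM (j + 1) (X - Y) := by
  constructor
  · intro h a b d hd
    have h2 := congrFun (congrFun h a) b
    simp only [jet, Matrix.map_apply] at h2
    have h3 := congrFun h2 d
    simp only [truncLE, Nat.lt_succ_iff] at hd h3
    rw [if_pos hd, if_pos hd] at h3
    simp only [Matrix.sub_apply, map_sub, h3, sub_self]
  · intro h
    funext a b
    simp only [jet, Matrix.map_apply]
    funext d
    simp only [truncLE]
    split_ifs with hd
    · have := h a b d (Nat.lt_succ_of_le hd)
      simp only [Matrix.sub_apply, map_sub, sub_eq_zero] at this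
      exact this
    · rfl

lemma jet_eq_zero_iff {j : ℕ} {X : Matrix (Fin m) (Fin n) (MvPowerSeries (Fin p) K)} :
    jet j X = 0 ↔ OrdM (j + 1) X := by
  have : jet j (0 : Matrix (Fin m) (Fin n) (MvPowerSeries (Fin p) K)) = 0 := by
    funext a b
    simp only [jet, Matrix.map_apply, Matrix.zero_apply]
    funext d
    show (if (d.sum fun _ n => n) ≤ j then MvPowerSeries.coeff d 0 else 0) = 0
    simp
  constructor
  · intro h
    have h2 : jet j X = jet j (0 : Matrix (Fin m) (Fin n) (MvPowerSeries (Fin p) K)) := by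
      rw [h, this]
    simpa using jet_eq_jet_iff.mp h2
  · intro h
    have h2 : OrdM (j + 1) (X - (0 : Matrix (Fin m) (Fin n) (MvPowerSeries (Fin p) K))) := by
      simpa using h
    rw [jet_eq_jet_iff.mpr h2, this]

end Aux

section Op

variable {K : Type*} [Field K] {m n p : ℕ}
variable (νl : Matrix (Fin m) (Fin m) (MvPowerSeries (Fin p) K))
variable (νrm : Matrix (Fin n) (Fin n) (MvPowerSeries (Fin p) K))

/-- Left multiplication operator. -/
noncomputable def Lop : Module.End (MvPowerSeries (Fin p) K)
    (Matrix (Fin m) (Fin n) (MvPowerSeries (Fin p) K)) where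
  toFun X := νl * X
  map_add' X Y := Matrix.mul_add _ _ _
  map_smul' c X := Matrix.mul_smul _ _ _

/-- Right multiplication operator. -/
noncomputable def Rop : Module.End (MvPowerSeries (Fin p) K)
    (Matrix (Fin m) (Fin n) (MvPowerSeries (Fin p) K)) where
  toFun X := X * νrm
  map_add' X Y := Matrix.add_mul _ _ _
  map_smul' c X := Matrix.smul_mul _ _ _

/-- The operator `X ↦ νl * X + X * νrm`. -/
noncomputable def Dopr (νl : Matrix (Fin m) (Fin m) (MvPowerSeries (Fin p) K))
    (νrm : Matrix (Fin n) (Fin n) (MvPowerSeries (Fin p) K)) :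
    Module.End (MvPowerSeries (Fin p) K) (Matrix (Fin m) (Fin n) (MvPowerSeries (Fin p) K)) :=
  Lop νl + Rop νrm

lemma commute_Lop_Rop : Commute (Lop (n := n) νl) (Rop (m := m) νrm) := by
  apply LinearMap.ext
  intro X
  show νl * (X * νrm) = (νl * X) * νrm
  rw [Matrix.mul_assoc]

lemma Lop_pow_apply (i : ℕ) (X : Matrix (Fin m) (Fin n) (MvPowerSeries (Fin p) K)) :
    ((Lop (n := n) νl) ^ i) X = νl ^ i * X := by
  induction i with
  | zero => simp
  | succ i ih =>
    rw [pow_succ', Module.End.mul_apply, ih, pow_succ', Matrix.mul_assoc]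
    rfl

lemma Rop_pow_apply (i : ℕ) (X : Matrix (Fin m) (Fin n) (MvPowerSeries (Fin p) K)) :
    ((Rop (m := m) νrm) ^ i) X = X * νrm ^ i := by
  induction i with
  | zero => simp
  | succ i ih =>
    rw [pow_succ', Module.End.mul_apply, ih, pow_succ, ← Matrix.mul_assoc]
    rfl

end Op

section Op2

variable {K : Type*} [Field K] {m n p : ℕ}
variable {νl : Matrix (Fin m) (Fin m) (MvPowerSeries (Fin p) K)}
variable {νrm : Matrix (Fin n) (Fin n) (MvPowerSeries (Fin p) K)}

lemma Dopr_apply (X : Matrix (Fin m) (Fin n) (MvPowerSeries (Fin p) K)) :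
    (Dopr νl νrm) X = νl * X + X * νrm := rfl

lemma ordM_op_apply {s : ℕ} {X : Matrix (Fin m) (Fin n) (MvPowerSeries (Fin p) K)}
    (hX : OrdM s X) : OrdM s ((Dopr νl νrm) X) := by
  rw [Dopr_apply]
  exact ordM_add (ordM_mul_left νl hX) (ordM_mul_right νrm hX)

lemma ordM_op_pow_apply {s : ℕ} (i : ℕ) {X : Matrix (Fin m) (Fin n) (MvPowerSeries (Fin p) K)}
    (hX : OrdM s X) : OrdM s (((Dopr νl νrm) ^ i) X) := by
  induction i with
  | zero => simpa using hX
  | succ i ih =>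
    rw [pow_succ', Module.End.mul_apply]
    exact ordM_op_apply (ih)

lemma ordM_op_raise {s : ℕ}
    (hl : ∀ a b, MvPowerSeries.constantCoeff (νl a b) = 0)
    (hrm : ∀ a b, MvPowerSeries.constantCoeff (νrm a b) = 0)
    {X : Matrix (Fin m) (Fin n) (MvPowerSeries (Fin p) K)}
    (hX : OrdM s X) : OrdM (s + 1) ((Dopr νl νrm) X) := by
  rw [Dopr_apply]
  exact ordM_add (ordM_raise_left hl hX) (ordM_raise_right hrm hX)

lemma ordM_op_pow_raise {s : ℕ} (i : ℕ)
    (hl : ∀ a b, MvPowerSeries.constantCoeff (νl a b) = 0)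
    (hrm : ∀ a b, MvPowerSeries.constantCoeff (νrm a b) = 0)
    {X : Matrix (Fin m) (Fin n) (MvPowerSeries (Fin p) K)}
    (hX : OrdM s X) : OrdM (s + 1) (((Dopr νl νrm) ^ (i + 1)) X) := by
  rw [pow_succ, Module.End.mul_apply]
  exact ordM_op_pow_apply i (ordM_op_raise hl hrm hX)

lemma ordM_pow_left {s : ℕ}
    (hl : ∀ a b, MvPowerSeries.constantCoeff (νl a b) = 0)
    (i : ℕ) {X : Matrix (Fin m) (Fin n) (MvPowerSeries (Fin p) K)}
    (hX : OrdM s X) : OrdM (s + i) (νl ^ i * X) := by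
  induction i with
  | zero => simpa using hX
  | succ i ih =>
    have : νl ^ (i + 1) * X = νl * (νl ^ i * X) := by
      rw [pow_succ', Matrix.mul_assoc]
    rw [this, ← Nat.add_assoc]
    exact ordM_raise_left hl ih

lemma ordM_pow_right {s : ℕ}
    (hrm : ∀ a b, MvPowerSeries.constantCoeff (νrm a b) = 0)
    (i : ℕ) {X : Matrix (Fin m) (Fin n) (MvPowerSeries (Fin p) K)}
    (hX : OrdM s X) : OrdM (s + i) (X * νrm ^ i) := by
  induction i with
  | zero => simpa using hX
  | succ i ih =>
    have : X * νrm ^ (i + 1) = (X * νrm ^ i) * νrm := by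
      rw [pow_succ, Matrix.mul_assoc]
    rw [this, ← Nat.add_assoc]
    exact ordM_raise_right hrm ih

lemma ordM_term (hl : ∀ a b, MvPowerSeries.constantCoeff (νl a b) = 0)
    (hrm : ∀ a b, MvPowerSeries.constantCoeff (νrm a b) = 0)
    (A : Matrix (Fin m) (Fin n) (MvPowerSeries (Fin p) K)) (i i' : ℕ) :
    OrdM (i + i') (νl ^ i * A * νrm ^ i') := by
  have h1 : OrdM i (νl ^ i * A) := by
    have := ordM_pow_left hl i (ord_zero A)
    simpa using this
  have := ordM_pow_right hrm i' h1
  exact this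

lemma dit_expand (νl : Matrix (Fin m) (Fin m) (MvPowerSeries (Fin p) K))
    (νrm : Matrix (Fin n) (Fin n) (MvPowerSeries (Fin p) K))
    (A : Matrix (Fin m) (Fin n) (MvPowerSeries (Fin p) K)) (s : ℕ) :
    ((Dopr νl νrm) ^ s) A
      = ∑ i ∈ Finset.range (s + 1), (s.choose i) • (νl ^ i * A * νrm ^ (s - i)) := by
  have h := Commute.add_pow (commute_Lop_Rop νl νrm) s
  refine Eq.trans (congrFun (congrArg DFunLike.coe h) A) ?_
  rw [LinearMap.sum_apply]
  refine Finset.sum_congr rfl fun i hi => ?_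
  rw [Module.End.mul_apply, Module.End.mul_apply, Module.End.natCast_apply,
    map_nsmul, map_nsmul, Rop_pow_apply, Lop_pow_apply]
  rw [Matrix.mul_assoc]

lemma factorial_smul_eq {K : Type*} [Field K] [CharZero K] {M : Type*} [AddCommGroup M]
    [Module K M] (s i : ℕ) (h : i ≤ s) (X : M) :
    ((s.factorial : K)⁻¹) • ((s.choose i) • X)
      = ((i.factorial : K)⁻¹ * ((s - i).factorial : K)⁻¹) • X := by
  rw [← Nat.cast_smul_eq_nsmul K, smul_smul]
  congr 1
  have hs := Nat.choose_mul_factorial_mul_factorial h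
  have h1 : (s.factorial : K) ≠ 0 := Nat.cast_ne_zero.mpr (Nat.factorial_ne_zero _)
  have h2 : (i.factorial : K) ≠ 0 := Nat.cast_ne_zero.mpr (Nat.factorial_ne_zero _)
  have h3 : (((s - i).factorial : K)) ≠ 0 := Nat.cast_ne_zero.mpr (Nat.factorial_ne_zero _)
  have hsK : (s.choose i : K) * (i.factorial : K) * ((s - i).factorial : K)
      = (s.factorial : K) := by exact_mod_cast congrArg (Nat.cast (R := K)) hs
  field_simp
  linear_combination hsK

lemma tri_reindex {M : Type*} [AddCommMonoid M] (j k : ℕ) (hjk : j ≤ k)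
    (f : ℕ → ℕ → M) :
    ∑ s ∈ Finset.range (j + 1), ∑ i ∈ Finset.range (s + 1), f i (s - i)
      = ∑ q ∈ (Finset.range (k + 1) ×ˢ Finset.range (k + 1)).filter
          (fun q => q.1 + q.2 ≤ j), f q.1 q.2 := by
  classical
  rw [Finset.sum_sigma' (Finset.range (j + 1)) (fun s => Finset.range (s + 1))
    (fun s i => f i (s - i))]
  refine Finset.sum_bij' (fun x _ => ((x.2 : ℕ), x.1 - x.2))
    (fun q _ => ⟨q.1 + q.2, q.1⟩) ?_ ?_ ?_ ?_ ?_
  · intro x hx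
    simp only [Finset.mem_sigma, Finset.mem_range] at hx
    simp only [Finset.mem_filter, Finset.mem_product, Finset.mem_range]
    omega
  · intro q hq
    simp only [Finset.mem_filter, Finset.mem_product, Finset.mem_range] at hq
    simp only [Finset.mem_sigma, Finset.mem_range]
    omega
  · intro x hx
    simp only [Finset.mem_sigma, Finset.mem_range] at hx
    ext
    · simp; omega
    · simp
  · intro q hq
    simp
  · intro x hx
    rfl

end Op2

theorem jet_stabilizer_iff {K : Type*} [Field K] [CharZero K] {m n p : ℕ}
    (νl : Matrix (Fin m) (Fin m) (MvPowerSeries (Fin p) K))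
    (νr : Matrix (Fin n) (Fin n) (MvPowerSeries (Fin p) K))
    (hl : ∀ a b, MvPowerSeries.constantCoeff (νl a b) = 0)
    (hr : ∀ a b, MvPowerSeries.constantCoeff (νr a b) = 0)
    (El : Matrix (Fin m) (Fin m) (MvPowerSeries (Fin p) K))
    (Er : Matrix (Fin n) (Fin n) (MvPowerSeries (Fin p) K))
    (hEl : IsExpOf νl El) (hEr : IsExpOf (-νr) Er)
    (A : Matrix (Fin m) (Fin n) (MvPowerSeries (Fin p) K)) (j : ℕ) :
    jet j (El * A * Er) = jet j A ↔ jet j (νl * A - A * νr) = 0 := by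
  classical
  set νrm : Matrix (Fin n) (Fin n) (MvPowerSeries (Fin p) K) := -νr with hνrm
  have hrm : ∀ a b, MvPowerSeries.constantCoeff (νrm a b) = 0 := by
    intro a b
    simp only [hνrm, Matrix.neg_apply, map_neg, hr a b, neg_zero]
  obtain ⟨k₁, hk₁⟩ := hEl j
  obtain ⟨k₂, hk₂⟩ := hEr j
  set k := max (max k₁ k₂) j with hk
  have hjk : j ≤ k := le_max_right _ _
  set P := expPartial νl k with hP
  set Q := expPartial νrm k with hQ
  have hPl : jet j P = jet j El := hk₁ k (le_trans (le_max_left _ _) (le_max_left _ _))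
  have hQr : jet j Q = jet j Er := hk₂ k (le_trans (le_max_right _ _) (le_max_left _ _))
  have hordP : OrdM (j + 1) (El - P) := by
    have h2 := ordM_neg (jet_eq_jet_iff.mp hPl)
    simpa using h2
  have hordQ : OrdM (j + 1) (Er - Q) := by
    have h2 := ordM_neg (jet_eq_jet_iff.mp hQr)
    simpa using h2
  have hEq1 : OrdM (j + 1) (El * A * Er - P * A * Q) := by
    have e : El * A * Er - P * A * Q = (El - P) * A * Er + P * A * (Er - Q) := by
      rw [Matrix.sub_mul, Matrix.sub_mul, Matrix.mul_sub]; abel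
    rw [e]
    exact ordM_add (ordM_mul_right _ (ordM_mul_right _ hordP))
      (ordM_mul_left _ hordQ)
  set W := ∑ s ∈ Finset.range (j + 1),
      ((s.factorial : K)⁻¹) • (((Dopr νl νrm) ^ s) A) with hW
  have hexp : P * A * Q = ∑ q ∈ (Finset.range (k+1) ×ˢ Finset.range (k+1)),
      ((q.1.factorial : K)⁻¹ * (q.2.factorial : K)⁻¹) • (νl ^ q.1 * A * νrm ^ q.2) := by
    refine Eq.trans ?_ (Finset.sum_product' (Finset.range (k+1)) (Finset.range (k+1))
      (fun i i' => ((i.factorial : K)⁻¹ * (i'.factorial : K)⁻¹) • (νl ^ i * A * νrm ^ i'))).symm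
    rw [hP, hQ]
    simp only [expPartial]
    rw [Matrix.sum_mul, Matrix.sum_mul]
    refine Finset.sum_congr rfl fun x hx => ?_
    rw [Matrix.mul_sum]
    refine Finset.sum_congr rfl fun y hy => ?_
    rw [Matrix.smul_mul, Matrix.smul_mul, Matrix.mul_smul, smul_smul]
  have hWtri : W = ∑ q ∈ (Finset.range (k+1) ×ˢ Finset.range (k+1)).filter
      (fun q => q.1 + q.2 ≤ j),
      ((q.1.factorial : K)⁻¹ * (q.2.factorial : K)⁻¹) • (νl ^ q.1 * A * νrm ^ q.2) := by
    rw [← tri_reindex j k hjk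
      (fun i i' => ((i.factorial : K)⁻¹ * (i'.factorial : K)⁻¹) • (νl ^ i * A * νrm ^ i')), hW]
    refine Finset.sum_congr rfl fun s hs => ?_
    rw [dit_expand νl νrm A s, Finset.smul_sum]
    refine Finset.sum_congr rfl fun i hi => ?_
    exact factorial_smul_eq s i (Nat.lt_succ_iff.mp (Finset.mem_range.mp hi)) _
  have hPQW : OrdM (j + 1) (P * A * Q - W) := by
    rw [hexp, hWtri,
      ← Finset.sum_filter_add_sum_filter_not (Finset.range (k+1) ×ˢ Finset.range (k+1))
        (fun q => q.1 + q.2 ≤ j), add_sub_cancel_left]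
    refine ordM_sum _ _ fun q hq => ?_
    simp only [Finset.mem_filter] at hq
    exact ordM_smul _ (ordM_mono (by omega) (ordM_term hl hrm A q.1 q.2))
  have hbridge : OrdM (j + 1) ((El * A * Er - A) - (W - A)) := by
    have e : (El * A * Er - A) - (W - A)
        = (El * A * Er - P * A * Q) + (P * A * Q - W) := by abel
    rw [e]; exact ordM_add hEq1 hPQW
  have hDit0 : (((Dopr νl νrm) ^ 0) A) = A := by
    rw [pow_zero]; rfl
  have hWA : W - A = ∑ i ∈ Finset.range j,
      (((i+1).factorial : K)⁻¹) • (((Dopr νl νrm) ^ (i+1)) A) := by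
    rw [hW, Finset.sum_range_succ'
      (fun s => ((s.factorial : K)⁻¹) • (((Dopr νl νrm) ^ s) A)) j]
    have h0 : (((Nat.factorial 0 : K))⁻¹) • (((Dopr νl νrm) ^ 0) A) = A := by
      rw [hDit0]; simp
    rw [h0, add_sub_cancel_right]
  have hshift : ∀ i : ℕ, ((Dopr νl νrm) ^ (i+1)) A
      = ((Dopr νl νrm) ^ i) (((Dopr νl νrm) ^ 1) A) := by
    intro i
    rw [pow_succ, Module.End.mul_apply, pow_one]
  have hDit1 : ((Dopr νl νrm) ^ 1) A = νl * A - A * νr := by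
    rw [pow_one, Dopr_apply, hνrm, Matrix.mul_neg, sub_eq_add_neg]
  rw [jet_eq_jet_iff, jet_eq_zero_iff, ← hDit1]
  constructor
  · intro H
    have hWAord : OrdM (j + 1) (W - A) := by
      have e : W - A = (El * A * Er - A) - ((El * A * Er - A) - (W - A)) := by abel
      rw [e]; exact ordM_sub H hbridge
    rw [hWA] at hWAord
    have raisekey : ∀ (c i : ℕ), OrdM c (((Dopr νl νrm) ^ 1) A)
        → OrdM (c + 1) (((Dopr νl νrm) ^ (i+1+1)) A) := by
      intro c i hc
      have e : ((Dopr νl νrm) ^ (i+1+1)) A = ((Dopr νl νrm) ^ (i+1)) (((Dopr νl νrm) ^ 1) A) := by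
        rw [pow_succ, Module.End.mul_apply, pow_one]
      rw [e]
      exact ordM_op_pow_raise i hl hrm hc
    have main : ∀ d, d ≤ j + 1 → OrdM d (((Dopr νl νrm) ^ 1) A) := by
      intro d
      induction d with
      | zero => exact fun _ => ord_zero _
      | succ d ih =>
        intro hd
        have hc : OrdM d (((Dopr νl νrm) ^ 1) A) := ih (by omega)
        by_cases hd0 : d = 0
        · subst hd0
          exact ordM_op_pow_raise 0 hl hrm (ord_zero A)
        · obtain ⟨j', rfl⟩ : ∃ j'', j = j'' + 1 := ⟨j - 1, by omega⟩
          have hsum := ordM_mono (show d + 1 ≤ (j' + 1) + 1 by omega) hWAord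
          rw [Finset.sum_range_succ'
            (fun i => (((i+1).factorial : K)⁻¹) • (((Dopr νl νrm) ^ (i+1)) A)) j'] at hsum
          have h1 : OrdM (d + 1) (∑ i ∈ Finset.range j',
              (((i+1+1).factorial : K)⁻¹) • (((Dopr νl νrm) ^ (i+1+1)) A)) :=
            ordM_sum _ _ fun i _ => ordM_smul _ (raisekey d i hc)
          have h2 := ordM_sub hsum h1
          rw [add_sub_cancel_left] at h2
          have h3 : OrdM (d + 1) ((((Nat.factorial (0+1) : K))⁻¹)
              • (((Dopr νl νrm) ^ (0+1)) A)) := h2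
          simpa using h3
    exact main (j + 1) le_rfl
  · intro H
    have hWAord : OrdM (j + 1) (W - A) := by
      rw [hWA]
      refine ordM_sum _ _ fun i _ => ordM_smul _ ?_
      rw [hshift i]
      exact ordM_op_pow_apply i H
    have e : El * A * Er - A = ((El * A * Er - A) - (W - A)) + (W - A) := by abel
    rw [e]; exact ordM_add hbridge hWAord
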